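/- For every compactly supported smooth function ψ: ℝ → ℝ and every x₀ > 0, one has ∫_{-x₀}^{x₀} (1+|x|)^{-2} ψ(x)² dx ≲ ψ(0)² + ∫_{-x₀}^{x₀} ψ'(x)² dx, with an absolute implicit constant. -/

import Mathlib

open MeasureTheory

/-- One-sided Hardy-type estimate on `[0, x₀]`. -/
lemma key_half (ψ : ℝ → ℝ) (hψ : ContDiff ℝ 1 ψ) (x₀ : ℝ) (hx₀ : 0 < x₀) :
    (∫ x in (0:ℝ)..x₀, ((1 + x) ^ 2)⁻¹ * ψ x ^ 2) ≤
      2 * ψ 0 ^ 2 + 4 * ∫ x in (0:ℝ)..x₀, (deriv ψ x) ^ 2 := by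
  have hcψ : Continuous ψ := hψ.continuous
  have hcψ' : Continuous (deriv ψ) := hψ.continuous_deriv le_rfl
  have hd : ∀ x, HasDerivAt ψ (deriv ψ x) x :=
    fun x => (hψ.differentiable one_ne_zero x).hasDerivAt
  have huIcc : Set.uIcc (0:ℝ) x₀ = Set.Icc 0 x₀ := Set.uIcc_of_le hx₀.le
  have hne : ∀ x ∈ Set.uIcc (0:ℝ) x₀, (1 + x) ≠ 0 := by
    intro x hx
    rw [huIcc] at hx
    have := hx.1
    intro h; linarith
  -- continuity facts
  have hc1x : Continuous (fun x : ℝ => 1 + x) := continuous_const.add continuous_id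
  have hcw : ContinuousOn (fun x : ℝ => ((1 + x) ^ 2)⁻¹) (Set.uIcc (0:ℝ) x₀) :=
    ((hc1x.pow 2).continuousOn).inv₀ (fun x hx => pow_ne_zero 2 (hne x hx))
  have hcf₁ : ContinuousOn (fun x : ℝ => ((1 + x) ^ 2)⁻¹ * ψ x ^ 2) (Set.uIcc (0:ℝ) x₀) :=
    hcw.mul ((hcψ.pow 2).continuousOn)
  have hcf₂ : ContinuousOn (fun x : ℝ => 2 * ψ x * deriv ψ x / (1 + x)) (Set.uIcc (0:ℝ) x₀) :=
    (((continuous_const.mul hcψ).mul hcψ').continuousOn).div (hc1x.continuousOn) hne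
  have hint₁ : IntervalIntegrable (fun x : ℝ => ((1 + x) ^ 2)⁻¹ * ψ x ^ 2) volume 0 x₀ :=
    hcf₁.intervalIntegrable
  have hint₂ : IntervalIntegrable (fun x : ℝ => 2 * ψ x * deriv ψ x / (1 + x)) volume 0 x₀ :=
    hcf₂.intervalIntegrable
  have hint₃ : IntervalIntegrable (fun x : ℝ => (deriv ψ x) ^ 2) volume 0 x₀ :=
    ((hcψ'.pow 2)).intervalIntegrable _ _
  -- integration by parts identity
  have hibp : (∫ x in (0:ℝ)..x₀,
      (((1 + x) ^ 2)⁻¹ * ψ x ^ 2 - 2 * ψ x * deriv ψ x / (1 + x)))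
      = -(ψ x₀ ^ 2 / (1 + x₀)) - -(ψ 0 ^ 2 / (1 + 0)) := by
    apply intervalIntegral.integral_eq_sub_of_hasDerivAt
    · intro x hx
      have h1x : (1 + x) ≠ 0 := hne x hx
      have h1 : HasDerivAt (fun x => ψ x ^ 2) (2 * ψ x * deriv ψ x) x := by
        simpa [mul_comm, mul_assoc] using (hd x).fun_pow 2
      have h2 : HasDerivAt (fun x : ℝ => 1 + x) 1 x := by
        simpa using (hasDerivAt_id x).const_add 1
      have := (h1.fun_div h2 h1x).fun_neg
      convert this using 1
      field_simp
      ring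
    · exact (hint₁.sub hint₂)
  have hsplit : (∫ x in (0:ℝ)..x₀,
      (((1 + x) ^ 2)⁻¹ * ψ x ^ 2 - 2 * ψ x * deriv ψ x / (1 + x)))
      = (∫ x in (0:ℝ)..x₀, ((1 + x) ^ 2)⁻¹ * ψ x ^ 2)
        - ∫ x in (0:ℝ)..x₀, 2 * ψ x * deriv ψ x / (1 + x) :=
    intervalIntegral.integral_sub hint₁ hint₂
  -- bound the boundary term
  have hbd : -(ψ x₀ ^ 2 / (1 + x₀)) - -(ψ 0 ^ 2 / (1 + 0)) ≤ ψ 0 ^ 2 := by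
    have h0 : (0:ℝ) ≤ ψ x₀ ^ 2 / (1 + x₀) := div_nonneg (sq_nonneg _) (by linarith)
    have : ψ 0 ^ 2 / (1 + 0) = ψ 0 ^ 2 := by norm_num
    rw [this]; linarith
  -- pointwise AM-GM bound
  have hmono : (∫ x in (0:ℝ)..x₀, 2 * ψ x * deriv ψ x / (1 + x))
      ≤ ∫ x in (0:ℝ)..x₀, ((1/2) * (((1 + x) ^ 2)⁻¹ * ψ x ^ 2) + 2 * (deriv ψ x) ^ 2) := by
    apply intervalIntegral.integral_mono_on hx₀.le hint₂
      ((hint₁.const_mul (1/2)).add (hint₃.const_mul 2))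
    intro x hx
    have ht : (0:ℝ) < 1 + x := by have := hx.1; linarith
    have ha : ((1 + x) ^ 2)⁻¹ * ψ x ^ 2 = (ψ x / (1 + x)) ^ 2 := by
      rw [div_pow]; ring
    have hb : 2 * ψ x * deriv ψ x / (1 + x) = 2 * (ψ x / (1 + x)) * deriv ψ x := by
      ring
    rw [ha, hb]
    nlinarith [sq_nonneg (ψ x / (1 + x) - 2 * deriv ψ x)]
  have hadd : (∫ x in (0:ℝ)..x₀, ((1/2) * (((1 + x) ^ 2)⁻¹ * ψ x ^ 2) + 2 * (deriv ψ x) ^ 2))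
      = (1/2) * (∫ x in (0:ℝ)..x₀, ((1 + x) ^ 2)⁻¹ * ψ x ^ 2)
        + 2 * ∫ x in (0:ℝ)..x₀, (deriv ψ x) ^ 2 := by
    rw [intervalIntegral.integral_add (hint₁.const_mul (1/2)) (hint₃.const_mul 2),
      intervalIntegral.integral_const_mul, intervalIntegral.integral_const_mul]
  rw [hsplit] at hibp
  rw [hadd] at hmono
  linarith

theorem poincare_weighted :
    ∃ C : ℝ, 0 < C ∧ ∀ ψ : ℝ → ℝ, ContDiff ℝ 1 ψ → HasCompactSupport ψ →
      ∀ x₀ : ℝ, 0 < x₀ →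
      (∫ x in Set.Icc (-x₀) x₀, ((1 + |x|) ^ 2)⁻¹ * ψ x ^ 2) ≤
        C * (ψ 0 ^ 2 + ∫ x in Set.Icc (-x₀) x₀, (deriv ψ x) ^ 2) := by
  refine ⟨4, by norm_num, ?_⟩
  intro ψ hψ _hsupp x₀ hx₀
  have hcψ : Continuous ψ := hψ.continuous
  have hcψ' : Continuous (deriv ψ) := hψ.continuous_deriv le_rfl
  have hd : ∀ x, HasDerivAt ψ (deriv ψ x) x :=
    fun x => (hψ.differentiable one_ne_zero x).hasDerivAt
  -- positive half
  have h1 := key_half ψ hψ x₀ hx₀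
  -- negative half via reflection
  have hφ : ContDiff ℝ 1 (fun x => ψ (-x)) := hψ.comp contDiff_id.neg
  have h2 := key_half (fun x => ψ (-x)) hφ x₀ hx₀
  have hdφ : ∀ x, deriv (fun x => ψ (-x)) x = -deriv ψ (-x) := by
    intro x
    have : HasDerivAt (fun x => ψ (-x)) (deriv ψ (-x) * (-1)) x :=
      (hd (-x)).comp x (hasDerivAt_neg x)
    simpa using this.deriv
  have hφ0 : (fun x => ψ (-x)) 0 = ψ 0 := by norm_num
  -- rewrite reflected integrals
  have e1 : (∫ x in (0:ℝ)..x₀, ((1 + x) ^ 2)⁻¹ * (fun x => ψ (-x)) x ^ 2)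
      = ∫ x in (-x₀)..(0:ℝ), ((1 - x) ^ 2)⁻¹ * ψ x ^ 2 := by
    have := intervalIntegral.integral_comp_neg (a := (0:ℝ)) (b := x₀)
      (fun x => ((1 - x) ^ 2)⁻¹ * ψ x ^ 2)
    simpa [sub_neg_eq_add] using this
  have e2 : (∫ x in (0:ℝ)..x₀, (deriv (fun x => ψ (-x)) x) ^ 2)
      = ∫ x in (-x₀)..(0:ℝ), (deriv ψ x) ^ 2 := by
    have h := intervalIntegral.integral_comp_neg (a := (0:ℝ)) (b := x₀)
      (fun x => (deriv ψ x) ^ 2)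
    rw [neg_zero] at h
    rw [← h]
    apply intervalIntegral.integral_congr
    intro x _
    show deriv (fun x => ψ (-x)) x ^ 2 = deriv ψ (-x) ^ 2
    rw [hdφ x]
    ring
  rw [e1, e2, neg_zero] at h2
  -- the weighted integrand
  set h : ℝ → ℝ := fun x => ((1 + |x|) ^ 2)⁻¹ * ψ x ^ 2 with hh
  have hch : Continuous h := by
    apply Continuous.mul _ (hcψ.pow 2)
    apply Continuous.inv₀ ((continuous_const.add continuous_abs).pow 2)
    intro x; exact pow_ne_zero 2 (ne_of_gt (add_pos_of_pos_of_nonneg one_pos (abs_nonneg x)))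
  -- convert set integrals to interval integrals
  have eL : (∫ x in Set.Icc (-x₀) x₀, h x) = ∫ x in (-x₀)..x₀, h x := by
    rw [intervalIntegral.integral_of_le (by linarith), integral_Icc_eq_integral_Ioc]
  have eR : (∫ x in Set.Icc (-x₀) x₀, (deriv ψ x) ^ 2)
      = ∫ x in (-x₀)..x₀, (deriv ψ x) ^ 2 := by
    rw [intervalIntegral.integral_of_le (by linarith), integral_Icc_eq_integral_Ioc]
  -- split interval integrals at 0
  have hLsplit : (∫ x in (-x₀)..x₀, h x)
      = (∫ x in (-x₀)..(0:ℝ), h x) + ∫ x in (0:ℝ)..x₀, h x :=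
    (intervalIntegral.integral_add_adjacent_intervals
      (hch.intervalIntegrable _ _) (hch.intervalIntegrable _ _)).symm
  have hRsplit : (∫ x in (-x₀)..x₀, (deriv ψ x) ^ 2)
      = (∫ x in (-x₀)..(0:ℝ), (deriv ψ x) ^ 2) + ∫ x in (0:ℝ)..x₀, (deriv ψ x) ^ 2 :=
    (intervalIntegral.integral_add_adjacent_intervals
      ((hcψ'.pow 2).intervalIntegrable _ _) ((hcψ'.pow 2).intervalIntegrable _ _)).symm
  -- identify the two halves with the lemma's integrands
  have eneg : (∫ x in (-x₀)..(0:ℝ), h x) = ∫ x in (-x₀)..(0:ℝ), ((1 - x) ^ 2)⁻¹ * ψ x ^ 2 := by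
    apply intervalIntegral.integral_congr
    intro x hx
    rw [Set.uIcc_of_le (by linarith : -x₀ ≤ (0:ℝ))] at hx
    have : |x| = -x := abs_of_nonpos hx.2
    simp only [hh, this, sub_eq_add_neg]
  have epos : (∫ x in (0:ℝ)..x₀, h x) = ∫ x in (0:ℝ)..x₀, ((1 + x) ^ 2)⁻¹ * ψ x ^ 2 := by
    apply intervalIntegral.integral_congr
    intro x hx
    rw [Set.uIcc_of_le hx₀.le] at hx
    have : |x| = x := abs_of_nonneg hx.1
    simp only [hh, this]
  rw [eL, hLsplit, eneg, epos, eR, hRsplit]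
  linarith
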